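/- Strong minimum principle: let N and k be positive integers with k ≤ N, let Ω ⊆ ℝ^N be an open connected set, and let u : Ω → ℝ be lower semicontinuous and a viscosity supersolution of P⁺_k(D²u) = 0 in Ω. If u attains its infimum over Ω at some point of Ω, then u is constant. -/

import Mathlib

open scoped BigOperators

/-- The eigenvalues of a symmetric real matrix, listed in nondecreasing order with
multiplicity (junk value `0` if the matrix is not Hermitian). -/
noncomputable def sortedEig {n : ℕ} (A : Matrix (Fin n) (Fin n) ℝ) : Fin n → ℝ :=
  if h : A.IsHermitian then h.eigenvalues ∘ Tuple.sort h.eigenvalues else 0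

/-- `P⁻_k(A)`: the sum of the `k` smallest eigenvalues of `A`. -/
noncomputable def Pminus {n : ℕ} (k : ℕ) (A : Matrix (Fin n) (Fin n) ℝ) : ℝ :=
  ∑ i : Fin n, if (i : ℕ) < k then sortedEig A i else 0

/-- `P⁺_k(A)`: the sum of the `k` largest eigenvalues of `A`. -/
noncomputable def Pplus {n : ℕ} (k : ℕ) (A : Matrix (Fin n) (Fin n) ℝ) : ℝ :=
  ∑ i : Fin n, if n - k ≤ (i : ℕ) then sortedEig A i else 0

/-- The Hessian matrix `D²u(x)` of `u : ℝ^N → ℝ` at `x`. -/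
noncomputable def hessianMatrix {N : ℕ} (u : EuclideanSpace ℝ (Fin N) → ℝ)
    (x : EuclideanSpace ℝ (Fin N)) : Matrix (Fin N) (Fin N) ℝ :=
  fun i j => iteratedFDeriv ℝ 2 u x ![EuclideanSpace.single i 1, EuclideanSpace.single j 1]

/-- `u` is a viscosity supersolution of `F(D²u) + g(u) = 0` in `Ω`. -/
def IsViscositySupersolution {N : ℕ} (F : Matrix (Fin N) (Fin N) ℝ → ℝ) (g : ℝ → ℝ)
    (Ω : Set (EuclideanSpace ℝ (Fin N))) (u : EuclideanSpace ℝ (Fin N) → ℝ) : Prop :=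
  ∀ x₀ ∈ Ω, ∀ φ : EuclideanSpace ℝ (Fin N) → ℝ, ContDiff ℝ 2 φ →
    IsLocalMinOn (fun x => u x - φ x) Ω x₀ →
      F (hessianMatrix φ x₀) + g (u x₀) ≤ 0

/-- `u` is a viscosity subsolution of `F(D²u) + g(u) = 0` in `Ω`. -/
def IsViscositySubsolution {N : ℕ} (F : Matrix (Fin N) (Fin N) ℝ → ℝ) (g : ℝ → ℝ)
    (Ω : Set (EuclideanSpace ℝ (Fin N))) (u : EuclideanSpace ℝ (Fin N) → ℝ) : Prop :=
  ∀ x₀ ∈ Ω, ∀ φ : EuclideanSpace ℝ (Fin N) → ℝ, ContDiff ℝ 2 φ →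
    IsLocalMaxOn (fun x => u x - φ x) Ω x₀ →
      0 ≤ F (hessianMatrix φ x₀) + g (u x₀)

/-- `u` is a viscosity solution of `F(D²u) + g(u) = 0` in `Ω`. -/
def IsViscositySolution {N : ℕ} (F : Matrix (Fin N) (Fin N) ℝ → ℝ) (g : ℝ → ℝ)
    (Ω : Set (EuclideanSpace ℝ (Fin N))) (u : EuclideanSpace ℝ (Fin N) → ℝ) : Prop :=
  IsViscositySubsolution F g Ω u ∧ IsViscositySupersolution F g Ω u


lemma lsc_closed_sub {X : Type*} [TopologicalSpace X] {K : Set X} (hK : IsClosed K) {f : X → ℝ}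
    (hf : LowerSemicontinuousOn f K) (c : ℝ) : IsClosed {x | x ∈ K ∧ f x ≤ c} := by
  apply isClosed_of_closure_subset
  intro x hx
  have hxK : x ∈ K := hK.closure_subset (closure_mono (fun y hy => hy.1) hx)
  refine ⟨hxK, ?_⟩
  by_contra hc
  push_neg at hc
  have hev : ∀ᶠ y in nhdsWithin x K, c < f y := hf x hxK c hc
  have hne : (nhdsWithin x {x | x ∈ K ∧ f x ≤ c}).NeBot :=
    mem_closure_iff_nhdsWithin_neBot.mp hx
  have hev2 : ∀ᶠ y in nhdsWithin x {x | x ∈ K ∧ f x ≤ c}, c < f y :=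
    (nhdsWithin_mono x (fun y hy => hy.1)) hev
  have hev3 : ∀ᶠ y in nhdsWithin x {x | x ∈ K ∧ f x ≤ c}, y ∈ {x | x ∈ K ∧ f x ≤ c} :=
    self_mem_nhdsWithin
  obtain ⟨y, hy1, hy2⟩ := (hev2.and hev3).exists
  exact absurd hy2.2 (not_le.mpr hy1)

lemma lsc_exists_min {X : Type*} [TopologicalSpace X] {K : Set X} (hK : IsCompact K)
    (hKc : IsClosed K) (hne : K.Nonempty) {f : X → ℝ} (hf : LowerSemicontinuousOn f K) :
    ∃ x ∈ K, ∀ y ∈ K, f x ≤ f y := by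
  haveI : Nonempty K := hne.to_subtype
  set t : K → Set X := fun y => {x | x ∈ K ∧ f x ≤ f y.1} with ht
  have h := IsCompact.nonempty_iInter_of_directed_nonempty_isCompact_isClosed t
    (fun a b => by
      rcases le_total (f a.1) (f b.1) with h | h
      · exact ⟨a, fun x hx => hx, fun x hx => ⟨hx.1, hx.2.trans h⟩⟩
      · exact ⟨b, fun x hx => ⟨hx.1, hx.2.trans h⟩, fun x hx => hx⟩)
    (fun y => ⟨y.1, y.2, le_refl _⟩)
    (fun y => hK.of_isClosed_subset (lsc_closed_sub hKc hf _) (fun x hx => hx.1))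
    (fun y => lsc_closed_sub hKc hf _)
  obtain ⟨x, hx⟩ := h
  simp only [Set.mem_iInter] at hx
  exact ⟨x, (hx ⟨hne.some, hne.some_mem⟩).1, fun y hy => (hx ⟨y, hy⟩).2⟩

lemma trace_eq_sum_eig {n : ℕ} {A : Matrix (Fin n) (Fin n) ℝ} (hA : A.IsHermitian) :
    A.trace = ∑ i, hA.eigenvalues i := by
  have h := hA.spectral_theorem
  have : A.trace = (Matrix.diagonal (RCLike.ofReal ∘ hA.eigenvalues) : Matrix (Fin n) (Fin n) ℝ).trace := by
    conv_lhs => rw [h]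
    rw [Unitary.conjStarAlgAut_apply, Matrix.trace_mul_cycle,
      (Matrix.mem_unitaryGroup_iff').mp (hA.eigenvectorUnitary).2, Matrix.one_mul]
  rw [this, Matrix.trace_diagonal]
  simp [RCLike.ofReal]

lemma sortedEig_eq {n : ℕ} {A : Matrix (Fin n) (Fin n) ℝ} (hA : A.IsHermitian) :
    sortedEig A = hA.eigenvalues ∘ Tuple.sort hA.eigenvalues := by
  unfold sortedEig; rw [dif_pos hA]

lemma sortedEig_mono {n : ℕ} {A : Matrix (Fin n) (Fin n) ℝ} (hA : A.IsHermitian) :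
    Monotone (sortedEig A) := by
  rw [sortedEig_eq hA]; exact Tuple.monotone_sort _

lemma sum_sortedEig {n : ℕ} {A : Matrix (Fin n) (Fin n) ℝ} (hA : A.IsHermitian) :
    ∑ i, sortedEig A i = A.trace := by
  rw [trace_eq_sum_eig hA, sortedEig_eq hA]
  exact Equiv.sum_comp (Tuple.sort hA.eigenvalues) hA.eigenvalues

lemma pplus_pos {n k : ℕ} (hk : 0 < k) (hkn : k ≤ n) {A : Matrix (Fin n) (Fin n) ℝ}
    (hA : A.IsHermitian) (htr : 0 < A.trace) : 0 < Pplus k A := by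
  have hn : 0 < n := lt_of_lt_of_le hk hkn
  set μ := sortedEig A with hμ
  have hmono := sortedEig_mono hA
  set T : Finset (Fin n) := Finset.univ.filter (fun i => n - k ≤ (i : ℕ)) with hT
  have hPplus : Pplus k A = ∑ i ∈ T, μ i := by
    rw [Pplus, hT, Finset.sum_filter]
  set i₀ : Fin n := ⟨n - k, by omega⟩ with hi₀
  -- cardinality of T
  have hcardT : T.card = k := by
    have : T.card = ∑ i : Fin n, if n - k ≤ (i : ℕ) then 1 else 0 := by
      rw [hT, Finset.card_filter]
    rw [this, Fin.sum_univ_eq_sum_range (fun m => if n - k ≤ m then 1 else 0) n]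
    rw [← Finset.card_filter]
    have : (Finset.range n).filter (fun m => n - k ≤ m) = Finset.Ico (n - k) n := by
      ext m; simp [Finset.mem_filter, Finset.mem_Ico, and_comm]
    rw [this, Nat.card_Ico]
    omega
  have hcardTc : Tᶜ.card = n - k := by
    have := Finset.card_compl T (α := Fin n)
    simp only [Fintype.card_fin] at this
    omega
  -- bounds
  have hTlower : T.card • μ i₀ ≤ ∑ i ∈ T, μ i := by
    apply Finset.card_nsmul_le_sum
    intro i hi
    apply hmono
    simp only [hT, Finset.mem_filter] at hi
    exact hi.2
  have hTcupper : ∑ i ∈ Tᶜ, μ i ≤ Tᶜ.card • μ i₀ := by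
    apply Finset.sum_le_card_nsmul
    intro i hi
    apply hmono
    simp only [hT, Finset.mem_compl, Finset.mem_filter, Finset.mem_univ, true_and, not_le] at hi
    exact le_of_lt hi
  have hsplit : ∑ i ∈ T, μ i + ∑ i ∈ Tᶜ, μ i = A.trace := by
    rw [Finset.sum_add_sum_compl, sum_sortedEig hA]
  rw [hPplus]
  by_contra hle
  push_neg at hle
  have h1 : (k : ℝ) * μ i₀ ≤ 0 := by
    have := hTlower
    rw [hcardT, nsmul_eq_mul] at this
    linarith
  have hμ0 : μ i₀ ≤ 0 := by
    have hkpos : (0:ℝ) < k := by exact_mod_cast hk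
    nlinarith
  have h2 : ∑ i ∈ Tᶜ, μ i ≤ 0 := by
    have := hTcupper
    rw [hcardTc, nsmul_eq_mul] at this
    have hnk : (0:ℝ) ≤ (n - k : ℕ) := by positivity
    nlinarith
  linarith

section barrier
variable {N : ℕ}
local notation "E" => EuclideanSpace ℝ (Fin N)

lemma contDiff_barrier (z : E) (α ε : ℝ) :
    ContDiff ℝ 2 (fun x : E => ε * Real.exp (-α * ‖x - z‖^2)) := by
  apply ContDiff.mul contDiff_const
  apply ContDiff.exp
  exact contDiff_const.mul ((contDiff_id.sub contDiff_const).norm_sq ℝ)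

lemma hasFDerivAt_barrier (z : E) (α ε : ℝ) (x : E) :
    HasFDerivAt (fun x : E => ε * Real.exp (-α * ‖x - z‖^2))
      ((ε * Real.exp (-α * ‖x - z‖^2) * (-2*α)) • innerSL ℝ (x - z)) x := by
  have h1 : HasFDerivAt (fun y : E => ‖y - z‖^2)
      (2 • ((innerSL ℝ (x - z)).comp (ContinuousLinearMap.id ℝ E))) x :=
    ((hasFDerivAt_id x).sub_const z).norm_sq
  have h2 := ((h1.const_mul (-α)).exp).const_mul ε
  refine h2.congr_fderiv ?_
  ext y
  simp only [ContinuousLinearMap.smul_apply, ContinuousLinearMap.coe_smul', Pi.smul_apply,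
    ContinuousLinearMap.coe_comp', Function.comp_apply, ContinuousLinearMap.coe_id', id_eq,
    innerSL_apply_apply, smul_eq_mul, two_smul, ContinuousLinearMap.add_apply]
  ring

noncomputable def rinnerSL (N : ℕ) :
    EuclideanSpace ℝ (Fin N) →L[ℝ] EuclideanSpace ℝ (Fin N) →L[ℝ] ℝ := innerSL ℝ

@[simp] lemma rinnerSL_apply (v w : E) : rinnerSL N v w = inner ℝ v w := rfl

lemma hasFDerivAt_inner_sub (z x : E) :
    HasFDerivAt (fun y : E => innerSL ℝ (y - z)) (rinnerSL N) x := by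
  have h2 := ((rinnerSL N).hasFDerivAt (x := x - z)).comp x ((hasFDerivAt_id x).sub_const z)
  rw [ContinuousLinearMap.comp_id] at h2
  exact h2

lemma fderiv_fderiv_barrier (z : E) (α ε : ℝ) (x : E) :
    HasFDerivAt (fderiv ℝ (fun x : E => ε * Real.exp (-α * ‖x - z‖^2)))
      ((ε * Real.exp (-α * ‖x - z‖^2) * (-2*α)) • rinnerSL N +
        ((4*α^2*ε*Real.exp (-α * ‖x - z‖^2)) • innerSL ℝ (x - z)).smulRight (innerSL ℝ (x - z))) x := by
  have hfd : fderiv ℝ (fun x : E => ε * Real.exp (-α * ‖x - z‖^2)) =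
      fun x => (ε * Real.exp (-α * ‖x - z‖^2) * (-2*α)) • innerSL ℝ (x - z) :=
    funext fun x => (hasFDerivAt_barrier z α ε x).fderiv
  rw [hfd]
  have hc : HasFDerivAt (fun y : E => ε * Real.exp (-α * ‖y - z‖^2) * (-2*α))
      (((4*α^2*ε*Real.exp (-α * ‖x - z‖^2)) • innerSL ℝ (x - z) : E →L[ℝ] ℝ)) x := by
    have := (hasFDerivAt_barrier z α ε x).mul_const (-2*α)
    refine this.congr_fderiv ?_
    ext y
    simp only [ContinuousLinearMap.smul_apply, innerSL_apply_apply, smul_eq_mul]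
    ring
  exact hc.smul (hasFDerivAt_inner_sub z x)

lemma hessian_barrier (z : E) (α ε : ℝ) (x : E) :
    hessianMatrix (fun y : E => ε * Real.exp (-α * ‖y - z‖^2)) x =
      fun i j => ε * Real.exp (-α * ‖x - z‖^2) *
        (4*α^2 * ((x - z) i) * ((x - z) j) - 2*α * (if i = j then 1 else 0)) := by
  funext i j
  have h2 := (fderiv_fderiv_barrier z α ε x).fderiv
  show iteratedFDeriv ℝ 2 _ x ![EuclideanSpace.single i 1, EuclideanSpace.single j 1] = _
  rw [iteratedFDeriv_two_apply, h2]
  simp only [Matrix.cons_val_zero, Matrix.cons_val_one, Matrix.head_cons,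
    ContinuousLinearMap.add_apply, ContinuousLinearMap.smul_apply,
    ContinuousLinearMap.smulRight_apply, innerSL_apply_apply, rinnerSL_apply, smul_eq_mul]
  rw [EuclideanSpace.inner_single_right, EuclideanSpace.inner_single_right,
    EuclideanSpace.inner_single_right]
  simp only [EuclideanSpace.single_apply, map_one, one_mul, starRingEnd_apply, star_trivial]
  by_cases hij : i = j
  · subst hij; simp; try ring
  · have hji : ¬ j = i := fun h => hij h.symm
    simp [hij, hji]; try ring


lemma hessian_barrier_herm (z : E) (α ε : ℝ) (x : E) :
    (hessianMatrix (fun y : E => ε * Real.exp (-α * ‖y - z‖^2)) x).IsHermitian := by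
  rw [hessian_barrier]
  show Matrix.conjTranspose _ = _
  funext i j
  show star ((fun i j => ε * Real.exp (-α * ‖x - z‖^2) *
      (4*α^2 * ((x - z) i) * ((x - z) j) - 2*α * (if i = j then (1:ℝ) else 0))) j i) = _
  simp only [star_trivial]
  by_cases hij : i = j
  · subst hij; rfl
  · have hji : ¬ j = i := fun h => hij h.symm
    simp only [hij, hji, if_false]
    ring

lemma hessian_barrier_trace (z : E) (α ε : ℝ) (x : E) :
    (hessianMatrix (fun y : E => ε * Real.exp (-α * ‖y - z‖^2)) x).trace =
      ε * Real.exp (-α * ‖x - z‖^2) * (4*α^2 * ‖x - z‖^2 - 2*α*N) := by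
  rw [hessian_barrier]
  have hnorm : ‖x - z‖^2 = ∑ i, ((x - z) i)^2 := by
    rw [EuclideanSpace.norm_eq, Real.sq_sqrt (by positivity)]
    simp [sq_abs]
  unfold Matrix.trace
  simp only [Matrix.diag, if_pos rfl, if_true]
  have heach : ∀ i : Fin N,
      ε * Real.exp (-α * ‖x - z‖ ^ 2) * (4 * α ^ 2 * (x - z) i * (x - z) i - 2 * α * 1)
      = (ε * Real.exp (-α * ‖x - z‖ ^ 2) * (4 * α ^ 2)) * ((x - z) i)^2
        - ε * Real.exp (-α * ‖x - z‖ ^ 2) * (2*α) := fun i => by ring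
  rw [Finset.sum_congr rfl fun i _ => heach i, Finset.sum_sub_distrib, ← Finset.mul_sum,
    Finset.sum_const, Finset.card_univ, Fintype.card_fin, nsmul_eq_mul, ← hnorm]
  ring

end barrier

section key
variable {N k : ℕ}
local notation "E" => EuclideanSpace ℝ (Fin N)
open Metric

set_option maxHeartbeats 2000000 in
lemma key_lemma (hk : 0 < k) (hkN : k ≤ N)
    {Ω : Set (EuclideanSpace ℝ (Fin N))} (hΩ : IsOpen Ω)
    {u : EuclideanSpace ℝ (Fin N) → ℝ} (hlsc : LowerSemicontinuousOn u Ω)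
    (hsuper : IsViscositySupersolution (Pplus k) (fun _ => 0) Ω u)
    {m : ℝ} (hmin : ∀ x ∈ Ω, m ≤ u x)
    {y : EuclideanSpace ℝ (Fin N)} (hy : y ∈ Ω) (hym : u y = m) :
    ∃ t > 0, Metric.ball y t ⊆ Ω ∧ ∀ x ∈ Metric.ball y t, u x = m := by
  classical
  have hN : 0 < N := lt_of_lt_of_le hk hkN
  -- a closed ball around y inside Ω
  obtain ⟨r, hr, hrΩ⟩ : ∃ r > 0, closedBall y r ⊆ Ω := by
    obtain ⟨r, hr, h⟩ := Metric.isOpen_iff.mp hΩ y hy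
    exact ⟨r/2, by linarith, fun x hx =>
      h (lt_of_le_of_lt (mem_closedBall.mp hx) (by linarith))⟩
  by_contra hcon
  push_neg at hcon
  have hball8 : Metric.ball y (r/8) ⊆ Ω := fun x hx =>
    hrΩ (mem_closedBall.mpr (le_of_lt (lt_of_lt_of_le (mem_ball.mp hx) (by linarith))))
  obtain ⟨z, hzball, hzne⟩ := hcon (r/8) (by linarith) hball8
  have hzΩ : z ∈ Ω := hball8 hzball
  have hzm : m < u z := lt_of_le_of_ne (hmin z hzΩ) (fun h => hzne h.symm)
  -- the open set where u > m
  set V : Set (EuclideanSpace ℝ (Fin N)) := {x | x ∈ Ω ∧ m < u x} with hV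
  have hVopen : IsOpen V := by
    rw [isOpen_iff_mem_nhds]
    rintro x ⟨hxΩ, hxm⟩
    have h1 : ∀ᶠ x' in nhdsWithin x Ω, m < u x' := hlsc x hxΩ m hxm
    rw [hΩ.nhdsWithin_eq hxΩ] at h1
    filter_upwards [h1, hΩ.mem_nhds hxΩ] with x' h1' h2'
    exact ⟨h2', h1'⟩
  have hzV : z ∈ V := ⟨hzΩ, hzm⟩
  have hVcne : Vᶜ.Nonempty := ⟨y, fun h => absurd hym (ne_of_gt h.2)⟩
  -- the maximal ball around z inside V
  set ρ := Metric.infDist z Vᶜ with hρ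
  have hρpos : 0 < ρ := by
    rw [hρ, ← hVopen.isClosed_compl.notMem_iff_infDist_pos hVcne]
    simpa using hzV
  have hρle : ρ < r/8 :=
    lt_of_le_of_lt (Metric.infDist_le_dist_of_mem (fun h => absurd hym (ne_of_gt h.2)))
      (mem_ball.mp hzball)
  have hballV : Metric.ball z ρ ⊆ V := by
    have := Metric.ball_infDist_compl_subset (x := z) (s := V)
    simpa [compl_compl] using this
  obtain ⟨p, hpVc, hpd⟩ := hVopen.isClosed_compl.exists_infDist_eq_dist hVcne z
  have hdzp : dist z p = ρ := hpd.symm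
  have hpΩ : p ∈ Ω := by
    apply hrΩ
    rw [mem_closedBall]
    calc dist p y ≤ dist p z + dist z y := dist_triangle _ _ _
    _ ≤ ρ + r/8 := by
        rw [dist_comm] at hdzp
        rw [hdzp]
        have := mem_ball.mp hzball
        linarith
    _ ≤ r := by linarith
  have hpm : u p = m := le_antisymm (by
      by_contra h
      exact hpVc ⟨hpΩ, lt_of_le_of_ne (hmin p hpΩ) (fun hh => h (le_of_eq hh.symm))⟩)
    (hmin p hpΩ)
  -- the barrier parameters
  set α : ℝ := (2*N+1)/ρ^2 with hα
  have hαpos : 0 < α := by positivity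
  have hαρ : α * ρ^2 = 2*N+1 := by
    rw [hα]; field_simp
  -- minimum of u on the inner sphere
  have hsphere_sub : Metric.sphere z (ρ/2) ⊆ V := fun x hx =>
    hballV (by rw [mem_ball, mem_sphere.mp hx]; linarith)
  have hsne : (Metric.sphere z (ρ/2)).Nonempty := by
    refine ⟨z + (ρ/2) • EuclideanSpace.single (⟨0, hN⟩ : Fin N) 1, ?_⟩
    rw [mem_sphere, dist_eq_norm]
    simp only [add_sub_cancel_left, norm_smul, EuclideanSpace.norm_single, norm_one]
    rw [Real.norm_eq_abs, abs_of_pos (by linarith)]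
    ring
  have hsphereΩ : Metric.sphere z (ρ/2) ⊆ Ω := fun x hx => (hsphere_sub hx).1
  obtain ⟨q₀, hq₀, hq₀min⟩ := lsc_exists_min (isCompact_sphere z (ρ/2))
    Metric.isClosed_sphere hsne (hlsc.mono hsphereΩ)
  set μ := u q₀ with hμ
  have hμm : m < μ := (hsphere_sub hq₀).2
  -- epsilon
  set e₀ : ℝ := Real.exp (-α * ρ^2) with he₀
  set eh : ℝ := Real.exp (-α * (ρ/2)^2) with heh
  have hehe₀ : e₀ < eh := by
    apply Real.exp_lt_exp.mpr
    nlinarith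
  set ε : ℝ := (μ - m)/(2*(eh - e₀)) with hε
  have hεpos : 0 < ε := by
    apply div_pos (by linarith) (by linarith)
  -- the annulus
  set K : Set (EuclideanSpace ℝ (Fin N)) :=
    Metric.closedBall z ρ \ Metric.ball z (ρ/2) with hK
  have hKcomp : IsCompact K := (isCompact_closedBall z ρ).diff Metric.isOpen_ball
  have hKclosed : IsClosed K := Metric.isClosed_closedBall.sdiff Metric.isOpen_ball
  have hKΩ : K ⊆ Ω := by
    intro x hx
    apply hrΩ
    rw [mem_closedBall]
    calc dist x y ≤ dist x z + dist z y := dist_triangle _ _ _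
    _ ≤ ρ + r/8 := add_le_add (mem_closedBall.mp hx.1) (le_of_lt (mem_ball.mp hzball))
    _ ≤ r := by linarith
  have hpK : p ∈ K := by
    constructor
    · rw [mem_closedBall, dist_comm]; rw [hdzp]
    · rw [mem_ball, dist_comm, hdzp]; simp; linarith
  -- the test function
  set φ : EuclideanSpace ℝ (Fin N) → ℝ := fun x => ε * Real.exp (-α * ‖x - z‖^2) with hφ
  set w : EuclideanSpace ℝ (Fin N) → ℝ := fun x => u x - φ x with hw
  have hwlsc : LowerSemicontinuousOn w K := by
    have h1 : LowerSemicontinuousOn u K := hlsc.mono hKΩ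
    have h2 : Continuous (fun x : EuclideanSpace ℝ (Fin N) => -φ x) := by
      rw [hφ]
      apply Continuous.neg
      exact continuous_const.mul
        (Real.continuous_exp.comp
          (continuous_const.mul (((continuous_id.sub continuous_const).norm).pow 2)))
    have : w = fun x => u x + (-φ x) := funext fun x => sub_eq_add_neg _ _
    rw [this]
    exact h1.add (h2.lowerSemicontinuous.lowerSemicontinuousOn K)
  obtain ⟨x₁, hx₁K, hx₁min⟩ := lsc_exists_min hKcomp hKclosed ⟨p, hpK⟩ hwlsc
  have hnormp : ‖p - z‖ = ρ := by rw [← dist_eq_norm, dist_comm]; exact hdzp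
  have hwp : w p = m - ε * e₀ := by
    rw [hw]; simp only [hφ, hpm, hnormp, he₀]
  have hwx₁ : w x₁ ≤ m - ε * e₀ := by rw [← hwp]; exact hx₁min p hpK
  -- x₁ is not on the inner sphere
  have hx₁far : ρ/2 < dist x₁ z := by
    rcases lt_or_eq_of_le (not_lt.mp (fun h => hx₁K.2 (mem_ball.mpr h)) : ρ/2 ≤ dist x₁ z) with h | h
    · exact h
    · exfalso
      have hx₁s : x₁ ∈ Metric.sphere z (ρ/2) := mem_sphere.mpr h.symm
      have h1 : μ ≤ u x₁ := hq₀min x₁ hx₁s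
      have hnx : ‖x₁ - z‖ = ρ/2 := by rw [← dist_eq_norm]; exact h.symm
      have h2 : φ x₁ = ε * eh := by
        simp only [hφ, heh, hnx]
      have : w x₁ = u x₁ - ε * eh := by
        simp only [hw]
        rw [h2]
      have hcontr : μ - ε * eh ≤ m - ε * e₀ := by
        rw [this] at hwx₁; linarith
      have : ε * (eh - e₀) < μ - m := by
        rw [hε]
        rw [div_mul_eq_mul_div]
        rw [div_lt_iff₀ (by linarith)]
        nlinarith
      linarith
  -- local minimum at x₁
  have hx₁Ω : x₁ ∈ Ω := hKΩ hx₁K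
  have hδ : 0 < dist x₁ z - ρ/2 := by linarith
  have hlocmin : IsLocalMinOn (fun x => u x - φ x) Ω x₁ := by
    have hmem : Metric.ball x₁ (dist x₁ z - ρ/2) ∩ Ω ∈ nhdsWithin x₁ Ω :=
      Filter.inter_mem (mem_nhdsWithin_of_mem_nhds
        (Metric.ball_mem_nhds _ hδ)) self_mem_nhdsWithin
    apply Filter.eventually_of_mem hmem
    rintro x ⟨hxb, hxΩ⟩
    show w x₁ ≤ w x
    by_cases hcase : dist x z ≤ ρ
    · -- x is in the annulus K
      apply hx₁min
      constructor
      · exact mem_closedBall.mpr hcase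
      · rw [mem_ball, not_lt]
        have := mem_ball.mp hxb
        have htri : dist x₁ z ≤ dist x₁ x + dist x z := dist_triangle _ _ _
        rw [dist_comm x₁ x] at htri
        linarith
    · -- x is outside the ball, where φ < ε e₀
      push_neg at hcase
      have hdx : ρ < ‖x - z‖ := by rw [← dist_eq_norm]; exact hcase
      have hsq : ρ^2 < ‖x - z‖^2 := by nlinarith
      have hφx : φ x < ε * e₀ := by
        simp only [hφ, he₀]
        apply mul_lt_mul_of_pos_left _ hεpos
        apply Real.exp_lt_exp.mpr
        nlinarith
      have : m - ε * e₀ < w x := by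
        have := hmin x hxΩ
        rw [hw]
        simp only
        linarith
      linarith
  -- apply the supersolution property
  have hsup := hsuper x₁ hx₁Ω φ (contDiff_barrier z α ε) hlocmin
  simp only [add_zero] at hsup
  -- contradiction with positivity of Pplus
  have hherm := hessian_barrier_herm z α ε x₁
  have htrace := hessian_barrier_trace z α ε x₁
  have hnorm : ρ/2 ≤ ‖x₁ - z‖ := by
    rw [← dist_eq_norm]; exact le_of_lt hx₁far
  have htrpos : 0 < (hessianMatrix φ x₁).trace := by
    rw [hφ, htrace]
    have h1 : 0 < Real.exp (-α * ‖x₁ - z‖^2) := Real.exp_pos _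
    have h2 : α * ρ^2 = 2*N+1 := hαρ
    have h3 : (ρ/2)^2 ≤ ‖x₁ - z‖^2 := by nlinarith
    have h4 : 0 < 4*α^2*‖x₁ - z‖^2 - 2*α*N := by nlinarith
    positivity
  have := pplus_pos hk hkN hherm htrpos
  rw [hφ] at hsup
  linarith

end key

theorem statement13 (N k : ℕ) (hk : 0 < k) (hkN : k ≤ N)
    (Ω : Set (EuclideanSpace ℝ (Fin N))) (hΩ : IsOpen Ω) (hconn : IsConnected Ω)
    (u : EuclideanSpace ℝ (Fin N) → ℝ) (hlsc : LowerSemicontinuousOn u Ω)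
    (hsuper : IsViscositySupersolution (Pplus k) (fun _ => 0) Ω u)
    (x₀ : EuclideanSpace ℝ (Fin N)) (hx₀ : x₀ ∈ Ω) (hmin : ∀ x ∈ Ω, u x₀ ≤ u x) :
    ∀ x ∈ Ω, u x = u x₀ := by
  classical
  set m := u x₀ with hm
  set U : Set (EuclideanSpace ℝ (Fin N)) := {x | x ∈ Ω ∧ u x = m} with hU
  set V : Set (EuclideanSpace ℝ (Fin N)) := {x | x ∈ Ω ∧ m < u x} with hV
  have hUopen : IsOpen U := by
    rw [Metric.isOpen_iff]
    rintro x ⟨hxΩ, hxm⟩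
    obtain ⟨t, ht, htΩ, htm⟩ := key_lemma hk hkN hΩ hlsc hsuper hmin hxΩ hxm
    exact ⟨t, ht, fun x' hx' => ⟨htΩ hx', htm x' hx'⟩⟩
  have hVopen : IsOpen V := by
    rw [isOpen_iff_mem_nhds]
    rintro x ⟨hxΩ, hxm⟩
    have h1 : ∀ᶠ x' in nhdsWithin x Ω, m < u x' := hlsc x hxΩ m hxm
    rw [hΩ.nhdsWithin_eq hxΩ] at h1
    filter_upwards [h1, hΩ.mem_nhds hxΩ] with x' h1' h2'
    exact ⟨h2', h1'⟩
  intro x hx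
  by_contra hne
  have hxV : x ∈ V := ⟨hx, lt_of_le_of_ne (hmin x hx) (fun h => hne h.symm)⟩
  have hcover : Ω ⊆ U ∪ V := by
    intro x' hx'
    rcases eq_or_lt_of_le (hmin x' hx') with h | h
    · exact Or.inl ⟨hx', h.symm⟩
    · exact Or.inr ⟨hx', h⟩
  have h1 : (Ω ∩ U).Nonempty := ⟨x₀, hx₀, hx₀, rfl⟩
  have h2 : (Ω ∩ V).Nonempty := ⟨x, hx, hxV⟩
  obtain ⟨x', _, hx'U, hx'V⟩ := hconn.isPreconnected U V hUopen hVopen hcover h1 h2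
  exact absurd hx'U.2 (ne_of_gt hx'V.2)
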